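/- Let G = (V,E) be a graph (possibly not dense) and t, ζ parameters for BalancedSeparator. Form G' by adding to G a disjoint clique K on t(1+ζ)+n vertices, where n = |V|. Then every S ⊆ V(G') with t(1−ζ) ≤ |S| ≤ t(1+ζ) can be converted to T ⊆ V with t(1−ζ) ≤ |T| ≤ t(1+ζ) and |E_G(T, V∖T)| ≤ |E_{G'}(S, V(G')∖S)|. Consequently, the minimum cut size over feasible sets in G equals the minimum over feasible sets in G'. -/

import Mathlib

open Finset

/-- The disjoint union of a graph `G` and a clique on `Fin m`. -/
def cliqueSum {V : Type*} (G : SimpleGraph V) (m : ℕ) : SimpleGraph (V ⊕ Fin m) where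
  Adj x y :=
    match x, y with
    | Sum.inl a, Sum.inl b => G.Adj a b
    | Sum.inr a, Sum.inr b => a ≠ b
    | _, _ => False
  symm := ⟨by
    rintro (a | a) (b | b) h
    · exact G.adj_symm h
    · exact h.elim
    · exact h.elim
    · exact h.symm⟩
  loopless := ⟨by
    rintro (a | a) h
    · exact G.irrefl h
    · exact h rfl⟩

instance cliqueSum.decidableAdj {V : Type*} (G : SimpleGraph V) [DecidableRel G.Adj]
    (m : ℕ) : DecidableRel (cliqueSum G m).Adj := fun x y =>
  match x, y with
  | Sum.inl a, Sum.inl b => inferInstanceAs (Decidable (G.Adj a b))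
  | Sum.inr a, Sum.inr b => inferInstanceAs (Decidable (a ≠ b))
  | Sum.inl _, Sum.inr _ => inferInstanceAs (Decidable False)
  | Sum.inr _, Sum.inl _ => inferInstanceAs (Decidable False)

lemma sum_toLeft_toRight {α β M : Type*} [DecidableEq α] [DecidableEq β] [AddCommMonoid M]
    (S : Finset (α ⊕ β)) (f : α ⊕ β → M) :
    ∑ v ∈ S, f v = ∑ a ∈ S.toLeft, f (Sum.inl a) + ∑ b ∈ S.toRight, f (Sum.inr b) := by
  classical
  have hS : S = S.toLeft.map ⟨Sum.inl, Sum.inl_injective⟩ ∪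
      S.toRight.map ⟨Sum.inr, Sum.inr_injective⟩ := by
    ext x
    cases x <;> simp
  have hd : Disjoint (S.toLeft.map ⟨Sum.inl, Sum.inl_injective⟩)
      (S.toRight.map ⟨Sum.inr, Sum.inr_injective⟩) := by
    simp [Finset.disjoint_left]
  conv_lhs => rw [hS]
  rw [sum_union hd, sum_map, sum_map]
  rfl

lemma cliqueSum_adj_inl {V : Type*} (G : SimpleGraph V) (m : ℕ) (a : V) (x : V ⊕ Fin m) :
    (cliqueSum G m).Adj (Sum.inl a) x ↔ ∃ b, G.Adj a b ∧ x = Sum.inl b := by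
  cases x with
  | inl b => simp [cliqueSum]
  | inr b => simp [cliqueSum]

lemma cliqueSum_adj_inr {V : Type*} (G : SimpleGraph V) (m : ℕ) (a : Fin m) (x : V ⊕ Fin m) :
    (cliqueSum G m).Adj (Sum.inr a) x ↔ ∃ b, b ≠ a ∧ x = Sum.inr b := by
  cases x with
  | inl b => simp [cliqueSum]
  | inr b => constructor
             · intro h; exact ⟨b, Ne.symm h, rfl⟩
             · rintro ⟨c, hc, h⟩; cases h; exact Ne.symm hc

/-- cut of `S` in the clique sum, in terms of the two parts. -/
lemma cut_cliqueSum {V : Type*} [Fintype V] [DecidableEq V] (G : SimpleGraph V)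
    [DecidableRel G.Adj] (m : ℕ) (S : Finset (V ⊕ Fin m)) :
    ∑ v ∈ S, ((cliqueSum G m).neighborFinset v ∩ Sᶜ).card
      = (∑ a ∈ S.toLeft, (G.neighborFinset a ∩ S.toLeftᶜ).card)
        + S.toRight.card * (m - S.toRight.card) := by
  classical
  rw [sum_toLeft_toRight]
  congr 1
  · apply sum_congr rfl
    intro a _
    have : (cliqueSum G m).neighborFinset (Sum.inl a) ∩ Sᶜ
        = (G.neighborFinset a ∩ S.toLeftᶜ).map ⟨Sum.inl, Sum.inl_injective⟩ := by
      ext x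
      cases x with
      | inl b => simp [SimpleGraph.mem_neighborFinset, cliqueSum_adj_inl]
      | inr b => simp [SimpleGraph.mem_neighborFinset, cliqueSum_adj_inl]
    rw [this, card_map]
  · rw [Finset.sum_congr rfl (fun b hb => ?_), sum_const, smul_eq_mul]
    have hb' : Sum.inr b ∈ S := mem_toRight.mp hb
    have : (cliqueSum G m).neighborFinset (Sum.inr b) ∩ Sᶜ
        = S.toRightᶜ.map ⟨Sum.inr, Sum.inr_injective⟩ := by
      ext x
      cases x with
      | inl c => simp [SimpleGraph.mem_neighborFinset, cliqueSum_adj_inr]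
      | inr c =>
          simp only [mem_inter, SimpleGraph.mem_neighborFinset, cliqueSum_adj_inr,
            mem_compl, mem_map, Function.Embedding.coeFn_mk, mem_toRight,
            Sum.inr.injEq]
          constructor
          · rintro ⟨⟨d, hd, hdc⟩, hc⟩
            exact ⟨c, hc, rfl⟩
          · rintro ⟨d, hd, rfl⟩
            refine ⟨⟨d, fun h => hd ?_, rfl⟩, hd⟩
            subst h; exact hb'
    rw [this, card_map, card_compl, Fintype.card_fin]

theorem stmt18 {V : Type*} [Fintype V] [DecidableEq V] (G : SimpleGraph V)
    [DecidableRel G.Adj] (t m : ℕ) (ζ : ℝ) (hζ : 0 < ζ)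
    (ht1 : 1 ≤ t) (ht2 : (t : ℝ) ≤ Fintype.card V / 2)
    (htn : (t : ℝ) * (1 + ζ) ≤ Fintype.card V)
    (hm : (m : ℝ) = t * (1 + ζ) + Fintype.card V) :
    (∀ S : Finset (V ⊕ Fin m),
        (t : ℝ) * (1 - ζ) ≤ S.card → (S.card : ℝ) ≤ t * (1 + ζ) →
        ∃ T : Finset V, (t : ℝ) * (1 - ζ) ≤ T.card ∧ (T.card : ℝ) ≤ t * (1 + ζ) ∧
          (∑ v ∈ T, ((G.neighborFinset v ∩ Tᶜ).card : ℝ))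
            ≤ ∑ v ∈ S, (((cliqueSum G m).neighborFinset v ∩ Sᶜ).card : ℝ)) ∧
      ∀ T : Finset V, (t : ℝ) * (1 - ζ) ≤ T.card → (T.card : ℝ) ≤ t * (1 + ζ) →
        ∃ S : Finset (V ⊕ Fin m),
          (t : ℝ) * (1 - ζ) ≤ S.card ∧ (S.card : ℝ) ≤ t * (1 + ζ) ∧
          (∑ v ∈ S, (((cliqueSum G m).neighborFinset v ∩ Sᶜ).card : ℝ))
            = ∑ v ∈ T, ((G.neighborFinset v ∩ Tᶜ).card : ℝ) := by
  classical
  set n := Fintype.card V with hn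
  constructor
  · -- forward direction
    intro S hl hu
    set X := S.toLeft with hX
    set Y := S.toRight with hY
    have hXY : X.card + Y.card = S.card := card_toLeft_add_card_toRight
    have hSn : S.card ≤ n := by
      have : (S.card : ℝ) ≤ n := hu.trans htn
      exact_mod_cast this
    set c := max X.card ⌈(t : ℝ) * (1 - ζ)⌉₊ with hc
    have hceil_t : ⌈(t : ℝ) * (1 - ζ)⌉₊ ≤ t := by
      apply Nat.ceil_le.mpr
      nlinarith [Nat.cast_nonneg (α := ℝ) t]
    have hc_le_S : c ≤ S.card :=
      max_le card_toLeft_le (Nat.ceil_le.mpr hl)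
    obtain ⟨T, hXT, hTc⟩ := Finset.exists_superset_card_eq (le_max_left _ _)
      (hc_le_S.trans hSn)
    refine ⟨T, ?_, ?_, ?_⟩
    · rw [hTc]
      calc (t : ℝ) * (1 - ζ) ≤ ⌈(t : ℝ) * (1 - ζ)⌉₊ := Nat.le_ceil _
        _ ≤ (c : ℝ) := by exact_mod_cast le_max_right _ _
    · rw [hTc]
      calc (c : ℝ) ≤ S.card := by exact_mod_cast hc_le_S
        _ ≤ t * (1 + ζ) := hu
    · -- cut inequality, proved in ℕ
      have keyNat : ∑ v ∈ T, (G.neighborFinset v ∩ Tᶜ).card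
          ≤ ∑ v ∈ S, ((cliqueSum G m).neighborFinset v ∩ Sᶜ).card := by
        rw [cut_cliqueSum]
        have hsplit : T = X ∪ (T \ X) := by
          rw [union_sdiff_of_subset hXT]
        have hdisj : Disjoint X (T \ X) := disjoint_sdiff
        have h1 : ∑ v ∈ X, (G.neighborFinset v ∩ Tᶜ).card
            ≤ ∑ v ∈ X, (G.neighborFinset v ∩ Xᶜ).card := by
          apply sum_le_sum
          intro v _
          exact card_le_card (inter_subset_inter (Finset.Subset.refl _) (compl_subset_compl.mpr hXT))
        have h2 : ∑ v ∈ T \ X, (G.neighborFinset v ∩ Tᶜ).card ≤ (T \ X).card * n := by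
          calc ∑ v ∈ T \ X, (G.neighborFinset v ∩ Tᶜ).card
              ≤ ∑ _ ∈ T \ X, n := sum_le_sum fun v _ => card_le_univ _
            _ = (T \ X).card * n := by rw [sum_const, smul_eq_mul]
        have hcard : (T \ X).card = c - X.card := by
          rw [card_sdiff_of_subset hXT, hTc]
        have hYm : Y.card + n ≤ m := by
          have h1 : (Y.card : ℝ) ≤ S.card := by
            exact_mod_cast (Nat.le_add_left _ _).trans hXY.le
          have : (Y.card : ℝ) + n ≤ m := by rw [hm]; linarith [hu]
          exact_mod_cast this
        have h3 : (T \ X).card * n ≤ Y.card * (m - Y.card) := by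
          apply Nat.mul_le_mul
          · rw [hcard]
            omega
          · omega
        calc ∑ v ∈ T, (G.neighborFinset v ∩ Tᶜ).card
            = ∑ v ∈ X, (G.neighborFinset v ∩ Tᶜ).card
              + ∑ v ∈ T \ X, (G.neighborFinset v ∩ Tᶜ).card := by
              have hsu := sum_union (f := fun v => (G.neighborFinset v ∩ Tᶜ).card) hdisj
              rw [← hsplit] at hsu
              exact hsu
          _ ≤ ∑ v ∈ X, (G.neighborFinset v ∩ Xᶜ).card + Y.card * (m - Y.card) := by
              have := h2.trans h3
              omega
          _ ≤ _ := le_refl _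
      calc ∑ v ∈ T, ((G.neighborFinset v ∩ Tᶜ).card : ℝ)
          = ((∑ v ∈ T, (G.neighborFinset v ∩ Tᶜ).card : ℕ) : ℝ) := by push_cast; rfl
        _ ≤ ((∑ v ∈ S, ((cliqueSum G m).neighborFinset v ∩ Sᶜ).card : ℕ) : ℝ) := by
            exact_mod_cast keyNat
        _ = _ := by push_cast; rfl
  · -- reverse direction
    intro T hl hu
    set e : V ↪ V ⊕ Fin m := ⟨Sum.inl, Sum.inl_injective⟩ with he
    refine ⟨T.map e, by simpa using hl, by simpa using hu, ?_⟩
    have hL : (T.map e).toLeft = T := by ext x; simp [he]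
    have hR : (T.map e).toRight = (∅ : Finset (Fin m)) := by ext x; simp [he]
    have hcut := cut_cliqueSum G m (T.map e)
    rw [hL, hR] at hcut
    simp only [card_empty, Nat.zero_mul, add_zero] at hcut
    calc ∑ v ∈ T.map e, (((cliqueSum G m).neighborFinset v ∩ (T.map e)ᶜ).card : ℝ)
        = ((∑ v ∈ T.map e,
            ((cliqueSum G m).neighborFinset v ∩ (T.map e)ᶜ).card : ℕ) : ℝ) := by
          push_cast; rfl
      _ = _ := by rw [hcut]; push_cast; rfl
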